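/- arXiv:2509.11987 — 2 statements merged into one kernel-verified Lean document; each statement's English description precedes it below -/
import Mathlib

section
/- Let x : [t₀, ∞) → ℝⁿ be continuously differentiable and α ∈ (0,1]. Then for every t ≥ t₀, the Caputo fractional derivative of order α of the function t ↦ (1/2)‖x(t)‖² satisfies ᶜD_t^α (½‖x(t)‖²) ≤ ⟨x(t), ᶜD_t^α x(t)⟩. -/
open Real MeasureTheory Filter Topology

noncomputable def caputoR (α t₀ : ℝ) (y : ℝ → ℝ) (t : ℝ) : ℝ :=
  (1 / Real.Gamma (1 - α)) * ∫ s in t₀..t, (t - s) ^ (-α) * deriv y s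

noncomputable def caputoV {n : ℕ} (α t₀ : ℝ) (x : ℝ → EuclideanSpace ℝ (Fin n)) (t : ℝ) :
    EuclideanSpace ℝ (Fin n) :=
  (1 / Real.Gamma (1 - α)) • ∫ s in t₀..t, ((t - s) ^ (-α)) • deriv x s

theorem stmt1 {n : ℕ} (α t₀ : ℝ) (hα : 0 < α ∧ α ≤ 1)
    (x : ℝ → EuclideanSpace ℝ (Fin n)) (hx : ContDiff ℝ 1 x) :
    ∀ t ≥ t₀,
      caputoR α t₀ (fun s => (1 / 2) * ‖x s‖ ^ 2) t ≤ (inner ℝ (x t) (caputoV α t₀ x t) : ℝ) := by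
  obtain ⟨hα0, hα1⟩ := hα
  intro t ht
  rcases eq_or_lt_of_le hα1 with h1 | hα1'
  · simp [caputoR, caputoV, h1, Real.Gamma_zero]
  rcases eq_or_lt_of_le ht with rfl | htt
  · simp [caputoR, caputoV]
  -- now t₀ < t, 0 < α < 1
  have hΓ : 0 < Real.Gamma (1 - α) := Real.Gamma_pos_of_pos (by linarith)
  have hc : (0:ℝ) ≤ 1 / Real.Gamma (1 - α) := by positivity
  have hd : Differentiable ℝ x := hx.differentiable one_ne_zero
  have hx' : Continuous (deriv x) := hx.continuous_deriv le_rfl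
  have hxc : Continuous x := hx.continuous
  set w : ℝ → ℝ := fun s => (t - s) ^ (-α) with hw
  set g : ℝ → ℝ := fun s => (1/2) * ‖x s - x t‖^2 with hgdef
  set g' : ℝ → ℝ := fun s => (inner ℝ (x s - x t) (deriv x s) : ℝ) with hg'def
  have hg'd : ∀ s, HasDerivAt g (g' s) s := by
    intro s
    have h1 : HasDerivAt (fun s => x s - x t) (deriv x s) s := ((hd s).hasDerivAt).sub_const _
    have h2 := (h1.inner ℝ h1).const_mul (1/2 : ℝ)
    have h3 : (1/2 : ℝ) * ((inner ℝ (x s - x t) (deriv x s) : ℝ) + (inner ℝ (deriv x s) (x s - x t) : ℝ)) = g' s := by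
      simp only [hg'def]
      rw [real_inner_comm (deriv x s)]; ring
    rw [h3] at h2
    have h4 : (fun y => (1/2 : ℝ) * (inner ℝ (x y - x t) (x y - x t) : ℝ)) = g := by
      funext u
      simp only [hgdef]
      rw [real_inner_self_eq_norm_sq]
    rw [h4] at h2
    exact h2
  have hg'c : Continuous g' := (hxc.sub continuous_const).inner hx'
  have hg0 : ∀ s, 0 ≤ g s := fun s => by positivity
  -- integrability of the weight
  have hw_int : IntervalIntegrable w volume t₀ t := by
    have h0 : IntervalIntegrable (fun u : ℝ => u ^ (-α)) volume 0 (t - t₀) :=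
      intervalIntegral.intervalIntegrable_rpow' (by linarith)
    have := (h0.comp_sub_left t).symm
    simpa using this
  have hwg'_int : IntervalIntegrable (fun s => w s * g' s) volume t₀ t :=
    hw_int.mul_continuousOn hg'c.continuousOn
  -- bound M on the derivative
  obtain ⟨M, hM⟩ := (isCompact_Icc (a := t₀) (b := t)).exists_bound_of_continuousOn
    hx'.continuousOn
  have hM0 : 0 ≤ M := le_trans (norm_nonneg _) (hM t₀ ⟨le_refl _, le_of_lt htt⟩)
  have hlip : ∀ u ∈ Set.Icc t₀ t, ‖x u - x t‖ ≤ M * (t - u) := by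
    intro u hu
    have := (convex_Icc t₀ t).norm_image_sub_le_of_norm_hasDerivWithin_le
      (f := x) (f' := deriv x) (C := M)
      (fun s hs => ((hd s).hasDerivAt).hasDerivWithinAt) hM
      (Set.right_mem_Icc.2 (le_of_lt htt)) hu
    calc ‖x u - x t‖ ≤ M * ‖u - t‖ := this
      _ = M * (t - u) := by rw [Real.norm_eq_abs, abs_sub_comm, abs_of_nonneg (by linarith [hu.2])]
  -- key inequality on subintervals
  have key_u : ∀ u ∈ Set.Ico t₀ t,
      (∫ s in t₀..u, w s * g' s) ≤ (1/2) * M^2 * (t - u) ^ (2 - α) := by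
    intro u hu
    obtain ⟨hu1, hu2⟩ := hu
    set w' : ℝ → ℝ := fun s => (-1) * (-α) * (t - s) ^ (-α - 1) with hw'def
    have hwcont : ContinuousOn w (Set.uIcc t₀ u) := by
      apply ContinuousOn.rpow_const (by fun_prop)
      intro s hs
      rw [Set.uIcc_of_le hu1] at hs
      exact Or.inl (by have := hs.2; intro h; nlinarith [hs.2])
    have hw'cont : ContinuousOn w' (Set.uIcc t₀ u) := by
      apply ContinuousOn.mul continuousOn_const
      apply ContinuousOn.rpow_const (by fun_prop)
      intro s hs
      rw [Set.uIcc_of_le hu1] at hs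
      exact Or.inl (by intro h; nlinarith [hs.2])
    have hwd : ∀ s ∈ Set.Ioo (min t₀ u) (max t₀ u), HasDerivAt w (w' s) s := by
      intro s hs
      rw [min_eq_left hu1, max_eq_right hu1] at hs
      have h1 : HasDerivAt (fun s : ℝ => t - s) (-1) s := (hasDerivAt_id s).const_sub t
      exact h1.rpow_const (Or.inl (by intro h; nlinarith [hs.2]))
    have ibp := intervalIntegral.integral_mul_deriv_eq_deriv_mul_of_hasDerivAt
      (a := t₀) (b := u) (u := w) (v := g) (u' := w') (v' := g')
      hwcont (by fun_prop)
      hwd (fun s _ => hg'd s)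
      (hw'cont.intervalIntegrable) (hg'c.intervalIntegrable _ _)
    have h1 : 0 ≤ w t₀ * g t₀ := mul_nonneg (Real.rpow_nonneg (by linarith) _) (hg0 _)
    have h2 : 0 ≤ ∫ s in t₀..u, w' s * g s := by
      apply intervalIntegral.integral_nonneg hu1
      intro s hs
      have : w' s = α * (t - s) ^ (-α - 1) := by simp only [hw'def]; ring
      rw [this]
      exact mul_nonneg (mul_nonneg (le_of_lt hα0) (Real.rpow_nonneg (by linarith [hs.2]) _)) (hg0 s)
    have h3 : (∫ s in t₀..u, w s * g' s) ≤ w u * g u := by rw [ibp]; linarith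
    have h4 : w u * g u ≤ (1/2) * M^2 * (t - u) ^ (2 - α) := by
      have hb := hlip u ⟨hu1, le_of_lt hu2⟩
      have hwu : 0 ≤ w u := Real.rpow_nonneg (by linarith) _
      have hgu : g u ≤ (1/2) * (M * (t - u))^2 := by
        rw [hgdef]
        have : ‖x u - x t‖^2 ≤ (M * (t - u))^2 := by
          apply sq_le_sq' _ hb
          nlinarith [norm_nonneg (x u - x t)]
        linarith
      calc w u * g u ≤ w u * ((1/2) * (M * (t - u))^2) := mul_le_mul_of_nonneg_left hgu hwu
        _ = (1/2) * M^2 * ((t - u) ^ (-α) * (t - u)^2) := by rw [hw]; ring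
        _ = (1/2) * M^2 * (t - u) ^ (2 - α) := by
            congr 1
            rw [← Real.rpow_natCast (t - u) 2, ← Real.rpow_add (by linarith)]
            norm_num
            rw [neg_add_eq_sub]
    linarith
  -- limit argument
  have hne : (𝓝[Set.Ico t₀ t] t).NeBot := by
    apply mem_closure_iff_nhdsWithin_neBot.mp
    rw [closure_Ico (ne_of_lt htt)]
    exact Set.right_mem_Icc.2 (le_of_lt htt)
  have hF : Filter.Tendsto (fun u => ∫ s in t₀..u, w s * g' s) (𝓝[Set.Ico t₀ t] t)
      (𝓝 (∫ s in t₀..t, w s * g' s)) := by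
    have hco := intervalIntegral.continuousOn_primitive_interval' hwg'_int
      (Set.left_mem_uIcc (a := t₀) (b := t))
    have := (hco t (by rw [Set.uIcc_of_le ht]; exact Set.right_mem_Icc.2 ht)).tendsto
    exact this.mono_left (nhdsWithin_mono t (by rw [Set.uIcc_of_le ht]; exact Set.Ico_subset_Icc_self))
  have hB : Filter.Tendsto (fun u => (1/2) * M^2 * (t - u) ^ (2 - α)) (𝓝[Set.Ico t₀ t] t)
      (𝓝 0) := by
    have h1 : Filter.Tendsto (fun u : ℝ => t - u) (𝓝[Set.Ico t₀ t] t) (𝓝 0) := by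
      have hc2 : Continuous (fun u : ℝ => t - u) := by fun_prop
      have := (hc2.tendsto t).mono_left (nhdsWithin_le_nhds (s := Set.Ico t₀ t))
      simpa using this
    have h2 : ContinuousAt (fun y : ℝ => y ^ (2 - α)) 0 :=
      Real.continuousAt_rpow_const 0 (2 - α) (Or.inr (by linarith))
    have h3 := (h2.tendsto.comp h1)
    rw [Real.zero_rpow (by intro h; linarith [h])] at h3
    have := h3.const_mul ((1/2) * M^2 : ℝ)
    simpa using this
  have hkey : (∫ s in t₀..t, w s * g' s) ≤ 0 := by
    apply le_of_tendsto_of_tendsto hF hB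
    filter_upwards [self_mem_nhdsWithin] with u hu
    exact key_u u hu
  -- assemble
  have hy : ∀ s, deriv (fun s => (1/2 : ℝ) * ‖x s‖^2) s = (inner ℝ (x s) (deriv x s) : ℝ) := by
    intro s
    have h1 : HasDerivAt x (deriv x s) s := (hd s).hasDerivAt
    have h2 := (h1.inner ℝ h1).const_mul (1/2 : ℝ)
    have h3 : (1/2 : ℝ) * ((inner ℝ (x s) (deriv x s) : ℝ) + (inner ℝ (deriv x s) (x s) : ℝ))
        = (inner ℝ (x s) (deriv x s) : ℝ) := by rw [real_inner_comm (deriv x s)]; ring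
    rw [h3] at h2
    have h4 : (fun s => (1/2 : ℝ) * (inner ℝ (x s) (x s) : ℝ)) = fun s => (1/2 : ℝ) * ‖x s‖^2 := by
      funext u; rw [real_inner_self_eq_norm_sq]
    rw [h4] at h2
    exact h2.deriv
  have hsmul_int : IntervalIntegrable (fun s => w s • deriv x s) volume t₀ t := by
    rw [intervalIntegrable_iff_integrableOn_Icc_of_le ht]
    exact ((intervalIntegrable_iff_integrableOn_Icc_of_le ht).mp hw_int).smul_continuousOn
      hx'.continuousOn isCompact_Icc
  have hrhs : (inner ℝ (x t) (caputoV α t₀ x t) : ℝ)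
      = (1 / Real.Gamma (1 - α)) * ∫ s in t₀..t, w s * (inner ℝ (x t) (deriv x s) : ℝ) := by
    simp only [caputoV]
    rw [real_inner_smul_right]
    congr 1
    have hcomm := (innerSL ℝ (x t)).intervalIntegral_comp_comm hsmul_int
    simp only [innerSL_apply_apply] at hcomm
    rw [← hcomm]
    apply intervalIntegral.integral_congr
    intro s _
    simp only [real_inner_smul_right]
  have hlhs : caputoR α t₀ (fun s => (1/2 : ℝ) * ‖x s‖^2) t
      = (1 / Real.Gamma (1 - α)) * ∫ s in t₀..t, w s * (inner ℝ (x s) (deriv x s) : ℝ) := by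
    simp only [caputoR]
    congr 1
    apply intervalIntegral.integral_congr
    intro s _
    simp only [hy, hw]
  have hi1 : IntervalIntegrable (fun s => w s * (inner ℝ (x s) (deriv x s) : ℝ)) volume t₀ t :=
    hw_int.mul_continuousOn (hxc.inner hx').continuousOn
  have hi2 : IntervalIntegrable (fun s => w s * (inner ℝ (x t) (deriv x s) : ℝ)) volume t₀ t :=
    hw_int.mul_continuousOn (continuous_const.inner hx').continuousOn
  have hsub : (∫ s in t₀..t, w s * (inner ℝ (x s) (deriv x s) : ℝ))
      - (∫ s in t₀..t, w s * (inner ℝ (x t) (deriv x s) : ℝ)) = ∫ s in t₀..t, w s * g' s := by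
    rw [← intervalIntegral.integral_sub hi1 hi2]
    apply intervalIntegral.integral_congr
    intro s _
    rw [hg'def]
    simp only [inner_sub_left]
    ring
  have : (∫ s in t₀..t, w s * (inner ℝ (x s) (deriv x s) : ℝ))
      ≤ ∫ s in t₀..t, w s * (inner ℝ (x t) (deriv x s) : ℝ) := by linarith [hsub ▸ hkey]
  calc caputoR α t₀ (fun s => (1/2 : ℝ) * ‖x s‖^2) t
      = (1 / Real.Gamma (1 - α)) * ∫ s in t₀..t, w s * (inner ℝ (x s) (deriv x s) : ℝ) := hlhs
    _ ≤ (1 / Real.Gamma (1 - α)) * ∫ s in t₀..t, w s * (inner ℝ (x t) (deriv x s) : ℝ) :=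
        mul_le_mul_of_nonneg_left this hc
    _ = (inner ℝ (x t) (caputoV α t₀ x t) : ℝ) := hrhs.symm
end

section
/- Let h : [t₀,∞) → ℝ be C² with h(t) ≥ 0, α > 1, and suppose h''(t) + (α/t) h'(t) ≤ g(t) for all t ≥ t₀, where g : [t₀,∞) → ℝ is nonnegative and satisfies ∫_{t₀}^∞ t g(t) dt < ∞. Then lim_{t→∞} h(t) exists (is finite). -/
open Filter
open MeasureTheory intervalIntegral Set Real

private lemma aux_mono_tendsto {f : ℝ → ℝ} {T M : ℝ}
    (hm : MonotoneOn f (Set.Ici T)) (hb : ∀ x ≥ T, f x ≤ M) :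
    ∃ l, Tendsto f atTop (nhds l) := by
  set F : ℝ → ℝ := fun x => f (max x T) with hF
  have hFm : Monotone F := fun x y hxy =>
    hm (Set.mem_Ici.mpr (le_max_right _ _)) (Set.mem_Ici.mpr (le_max_right _ _)) (max_le_max hxy le_rfl)
  have hbdd : BddAbove (Set.range F) := ⟨M, by rintro _ ⟨x, rfl⟩; exact hb _ (le_max_right _ _)⟩
  refine ⟨⨆ x, F x, (tendsto_atTop_ciSup hFm hbdd).congr' ?_⟩
  filter_upwards [eventually_ge_atTop T] with x hx
  simp [hF, max_eq_left hx]

private lemma aux_anti_tendsto {f : ℝ → ℝ} {T M : ℝ}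
    (hm : AntitoneOn f (Set.Ici T)) (hb : ∀ x ≥ T, M ≤ f x) :
    ∃ l, Tendsto f atTop (nhds l) := by
  obtain ⟨l, hl⟩ := aux_mono_tendsto (f := fun x => -f x) (M := -M)
    (fun x hx y hy hxy => neg_le_neg (hm hx hy hxy)) (fun x hx => neg_le_neg (hb x hx))
  exact ⟨-l, by simpa using hl.neg⟩

theorem stmt18 (t₀ α : ℝ) (hα : 1 < α) (h g : ℝ → ℝ) (hC2 : ContDiff ℝ 2 h)
    (hnn : ∀ t ≥ t₀, 0 ≤ h t) (hg : ∀ t ≥ t₀, 0 ≤ g t)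
    (hineq : ∀ t ≥ t₀, deriv (deriv h) t + (α / t) * deriv h t ≤ g t)
    (hint : MeasureTheory.IntegrableOn (fun t => t * g t) (Set.Ici t₀)) :
    ∃ l : ℝ, Tendsto h atTop (nhds l) := by
  -- basic regularity
  have h1 : ContDiff ℝ ((1:ℕ∞)+1) h := by exact_mod_cast hC2
  have h2 := contDiff_succ_iff_deriv.mp h1
  have h3 : ContDiff ℝ ((0:ℕ∞)+1) (deriv h) := by exact_mod_cast h2.2.2
  have hdh : Differentiable ℝ (deriv h) := h2.2.2.differentiable (by simp)
  have hddh_cont : Continuous (deriv (deriv h)) :=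
    (contDiff_succ_iff_deriv.mp h3).2.2.continuous
  have hdh_cont : Continuous (deriv h) := hdh.continuous
  have hh_diff : Differentiable ℝ h := h2.1
  -- setup
  set T : ℝ := max t₀ 1 with hTdef
  have hT0 : (0:ℝ) < T := lt_of_lt_of_le one_pos (le_max_right _ _)
  have hTt₀ : t₀ ≤ T := le_max_left _ _
  have hpos : ∀ t : ℝ, t ∈ Set.Ici T → 0 < t := fun t ht => lt_of_lt_of_le hT0 ht
  set g1 : ℝ → ℝ := fun t => max (deriv (deriv h) t + (α / t) * deriv h t) 0 with hg1def
  have hg1nn : ∀ t, 0 ≤ g1 t := fun t => le_max_right _ _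
  have hg1le : ∀ t ≥ T, g1 t ≤ g t := fun t ht =>
    max_le (hineq t (hTt₀.trans ht)) (hg t (hTt₀.trans ht))
  have hineq1 : ∀ t, deriv (deriv h) t + (α / t) * deriv h t ≤ g1 t := fun t => le_max_left _ _
  have hg1c : ContinuousOn g1 (Set.Ioi (0:ℝ)) := by
    have hinner : ContinuousOn (fun t => deriv (deriv h) t + (α / t) * deriv h t)
        (Set.Ioi (0:ℝ)) :=
      hddh_cont.continuousOn.add ((continuousOn_const.div continuousOn_id
        (fun t ht => ne_of_gt (Set.mem_Ioi.mp ht))).mul hdh_cont.continuousOn)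
    exact (continuous_id.max continuous_const).comp_continuousOn hinner
  -- the function f := t^α g1 t, continuous on Ioi 0
  set f : ℝ → ℝ := fun t => t ^ α * g1 t with hfdef
  have hfc : ContinuousOn f (Set.Ioi (0:ℝ)) := by
    intro t ht
    exact ((Real.continuousAt_rpow_const t α (Or.inl (ne_of_gt ht))).continuousWithinAt.mul
      (hg1c t ht))
  have hfnn : ∀ t ∈ Set.Ici T, 0 ≤ f t := fun t ht =>
    mul_nonneg (Real.rpow_nonneg (le_of_lt (hpos t ht)) _) (hg1nn t)
  have hIccIoi : ∀ x ≥ T, Set.uIcc T x ⊆ Set.Ioi (0:ℝ) := by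
    intro x hx t ht
    rw [Set.uIcc_of_le hx] at ht
    exact lt_of_lt_of_le hT0 ht.1
  have hfint : ∀ x ≥ T, IntervalIntegrable f volume T x := fun x hx =>
    (hfc.mono (hIccIoi x hx)).intervalIntegrable
  -- F x = ∫_T^x f
  set F : ℝ → ℝ := fun x => ∫ t in T..x, f t with hFdef
  have hF0 : F T = 0 := intervalIntegral.integral_same
  have hFnn : ∀ x ≥ T, 0 ≤ F x := fun x hx =>
    intervalIntegral.integral_nonneg hx (fun t ht => hfnn t ht.1)
  have hFderiv : ∀ t ∈ Set.Ioi (0:ℝ), t ≥ T → HasDerivAt F (f t) t := by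
    intro t ht htT
    exact intervalIntegral.integral_hasDerivAt_right (hfint t htT)
      (hfc.stronglyMeasurableAtFilter isOpen_Ioi t ht) (hfc.continuousAt (Ioi_mem_nhds ht))
  -- φ = t^α * h'
  set φ : ℝ → ℝ := fun t => t ^ α * deriv h t with hφdef
  have hφd : ∀ t : ℝ, 0 < t →
      HasDerivAt φ (α * t ^ (α-1) * deriv h t + t ^ α * deriv (deriv h) t) t := by
    intro t ht
    exact (Real.hasDerivAt_rpow_const (Or.inl (ne_of_gt ht))).mul (hdh t).hasDerivAt
  have hφ'le : ∀ t ≥ T, α * t ^ (α-1) * deriv h t + t ^ α * deriv (deriv h) t ≤ f t := by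
    intro t ht
    have htpos : (0:ℝ) < t := hpos t ht
    have key : t ^ α * (α / t) = α * t ^ (α - 1) := by
      rw [Real.rpow_sub htpos, Real.rpow_one]
      field_simp
    have := mul_le_mul_of_nonneg_left (hineq1 t) (Real.rpow_nonneg htpos.le α)
    calc α * t ^ (α-1) * deriv h t + t ^ α * deriv (deriv h) t
        = t ^ α * (deriv (deriv h) t + (α / t) * deriv h t) := by rw [mul_add, ← key]; ring
      _ ≤ t ^ α * g1 t := this
  -- φ' integrable (continuous)
  have hφ'c : ContinuousOn (fun t => α * t ^ (α-1) * deriv h t + t ^ α * deriv (deriv h) t)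
      (Set.Ioi (0:ℝ)) := by
    intro t ht
    exact (((continuousAt_const.mul (Real.continuousAt_rpow_const t _ (Or.inl (ne_of_gt ht)))).mul
      hdh_cont.continuousAt).add
      ((Real.continuousAt_rpow_const t _ (Or.inl (ne_of_gt ht))).mul
        hddh_cont.continuousAt)).continuousWithinAt
  set C : ℝ := max (φ T) 0 with hCdef
  have hC0 : 0 ≤ C := le_max_right _ _
  -- ψ
  set ψ : ℝ → ℝ := fun t => t ^ (-α) * (C + F t) with hψdef
  have hψnn : ∀ t ≥ T, 0 ≤ ψ t := fun t ht =>
    mul_nonneg (Real.rpow_nonneg (hpos t ht).le _) (add_nonneg hC0 (hFnn t ht))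
  have hFc : ContinuousOn F (Set.Ici T) := by
    intro t ht
    exact (hFderiv t (hpos t ht) ht).continuousAt.continuousWithinAt
  have hψc : ContinuousOn ψ (Set.Ici T) := by
    intro t ht
    exact ((Real.continuousAt_rpow_const t _ (Or.inl (ne_of_gt (hpos t ht)))).continuousWithinAt.mul
      (continuousOn_const.add hFc t ht))
  have hψint : ∀ ⦃x y : ℝ⦄, T ≤ x → x ≤ y → IntervalIntegrable ψ volume x y := by
    intro x y hx hxy
    apply (hψc.mono ?_).intervalIntegrable
    rw [Set.uIcc_of_le hxy]
    exact fun t ht => hx.trans ht.1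
  -- h' ≤ ψ on [T, ∞)
  have hh'le : ∀ x ≥ T, deriv h x ≤ ψ x := by
    intro x hx
    have hxpos : (0:ℝ) < x := hpos x hx
    have hsub : Set.uIcc T x ⊆ Set.Ioi (0:ℝ) := hIccIoi x hx
    have hftc : ∫ t in T..x, (α * t ^ (α-1) * deriv h t + t ^ α * deriv (deriv h) t)
        = φ x - φ T :=
      intervalIntegral.integral_eq_sub_of_hasDerivAt
        (fun t ht => hφd t (hsub ht)) ((hφ'c.mono hsub).intervalIntegrable)
    have hmono : ∫ t in T..x, (α * t ^ (α-1) * deriv h t + t ^ α * deriv (deriv h) t)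
        ≤ ∫ t in T..x, f t :=
      intervalIntegral.integral_mono_on hx ((hφ'c.mono hsub).intervalIntegrable)
        (hfint x hx) (fun t ht => hφ'le t ht.1)
    have hφle : φ x ≤ C + F x := by
      have := hftc ▸ hmono
      have hφT : φ T ≤ C := le_max_left _ _
      linarith
    have hxα : (0:ℝ) < x ^ α := Real.rpow_pos_of_pos hxpos α
    have : deriv h x = x ^ (-α) * φ x := by
      rw [hφdef]
      rw [Real.rpow_neg hxpos.le]
      field_simp
    rw [this, hψdef]
    exact mul_le_mul_of_nonneg_left hφle (Real.rpow_nonneg hxpos.le _)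
  -- Ψ
  set Ψ : ℝ → ℝ := fun x => ∫ t in T..x, ψ t with hΨdef
  have hΨadd : ∀ ⦃x y : ℝ⦄, T ≤ x → x ≤ y → Ψ y = Ψ x + ∫ t in x..y, ψ t := by
    intro x y hx hxy
    rw [hΨdef]
    exact (intervalIntegral.integral_add_adjacent_intervals (hψint le_rfl hx)
      (hψint hx hxy)).symm
  have hΨmono : MonotoneOn Ψ (Set.Ici T) := by
    intro x hx y hy hxy
    rw [hΨadd hx hxy]
    have : 0 ≤ ∫ t in x..y, ψ t :=
      intervalIntegral.integral_nonneg hxy (fun t ht => hψnn t (le_trans hx ht.1))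
    linarith
  -- h - Ψ antitone
  have hAnti : AntitoneOn (fun x => h x - Ψ x) (Set.Ici T) := by
    intro x hx y hy hxy
    have hftc : ∫ t in x..y, deriv h t = h y - h x :=
      intervalIntegral.integral_eq_sub_of_hasDerivAt
        (fun t _ => (hh_diff t).hasDerivAt) (hdh_cont.intervalIntegrable x y)
    have hmono : ∫ t in x..y, deriv h t ≤ ∫ t in x..y, ψ t :=
      intervalIntegral.integral_mono_on hxy (hdh_cont.intervalIntegrable x y)
        (hψint hx hxy) (fun t ht => hh'le t (le_trans hx ht.1))
    have := hΨadd hx hxy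
    simp only []
    linarith [hftc ▸ hmono]
  -- the bound on Ψ
  set I : ℝ := ∫ t in Set.Ici T, t * g t with hIdef
  have hintT : IntegrableOn (fun t => t * g t) (Set.Ici T) :=
    hint.mono_set (Set.Ici_subset_Ici.mpr hTt₀)
  have htg1_le_I : ∀ x ≥ T, (∫ t in T..x, t * g1 t) ≤ I := by
    intro x hx
    rw [intervalIntegral.integral_of_le hx]
    have hsub : Set.Ioc T x ⊆ Set.Ici T := fun t ht => ht.1.le
    have hg1int : IntegrableOn (fun t => t * g1 t) (Set.Ioc T x) := by
      have hc : ContinuousOn (fun t => t * g1 t) (Set.Icc T x) :=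
        continuousOn_id.mul (hg1c.mono (fun s (hs : s ∈ Set.Icc T x) =>
          Set.mem_Ioi.mpr (lt_of_lt_of_le hT0 hs.1)))
      exact hc.integrableOn_Icc.mono_set Set.Ioc_subset_Icc_self
    have step1 : (∫ t in Set.Ioc T x, t * g1 t) ≤ ∫ t in Set.Ioc T x, t * g t := by
      apply setIntegral_mono_on hg1int (hintT.mono_set hsub) measurableSet_Ioc
      intro t ht
      exact mul_le_mul_of_nonneg_left (hg1le t ht.1.le) (le_of_lt (lt_of_lt_of_le hT0 ht.1.le))
    have step2 : (∫ t in Set.Ioc T x, t * g t) ≤ I := by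
      apply setIntegral_mono_set hintT ?_ (HasSubset.Subset.eventuallyLE hsub)
      filter_upwards [ae_restrict_mem measurableSet_Ici] with t ht
      exact mul_nonneg (le_of_lt (lt_of_lt_of_le hT0 ht)) (hg t (hTt₀.trans ht))
    linarith
  set M : ℝ := C * (T ^ (1-α) / (α-1)) + (α-1)⁻¹ * I with hMdef
  have hΨle : ∀ x ≥ T, Ψ x ≤ M := by
    intro x hx
    have hxpos : (0:ℝ) < x := hpos x hx
    have hsub : Set.uIcc T x ⊆ Set.Ioi (0:ℝ) := hIccIoi x hx
    -- split
    have hint1 : IntervalIntegrable (fun t => C * t ^ (-α)) volume T x := by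
      apply ContinuousOn.intervalIntegrable
      intro t ht
      exact continuousOn_const.mul
        (fun s hs => (Real.continuousAt_rpow_const s _ (Or.inl (ne_of_gt (hsub hs)))).continuousWithinAt) t ht
    have hint2 : IntervalIntegrable (fun t => t ^ (-α) * F t) volume T x := by
      apply ContinuousOn.intervalIntegrable
      intro t ht
      have hsubIci : Set.uIcc T x ⊆ Set.Ici T := by
        rw [Set.uIcc_of_le hx]; exact fun s hs => hs.1
      exact ((Real.continuousAt_rpow_const t _ (Or.inl (ne_of_gt (hsub ht)))).continuousWithinAt.mul
        ((hFc t (hsubIci ht)).mono hsubIci))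
    have hsplit : Ψ x = (∫ t in T..x, C * t ^ (-α)) + ∫ t in T..x, t ^ (-α) * F t := by
      rw [hΨdef, ← intervalIntegral.integral_add hint1 hint2]
      apply intervalIntegral.integral_congr
      intro t ht
      simp only [hψdef]
      ring
    -- first part
    have hrpow_int : ∫ t in T..x, t ^ (-α) = (x ^ (-α+1) - T ^ (-α+1)) / (-α+1) :=
      integral_rpow (Or.inr ⟨by intro hc; rw [neg_eq_iff_eq_neg] at hc; linarith,
        fun hc => lt_irrefl 0 (Set.mem_Ioi.mp (hsub hc))⟩)
    have hpart1 : (∫ t in T..x, C * t ^ (-α)) ≤ C * (T ^ (1-α) / (α-1)) := by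
      rw [intervalIntegral.integral_const_mul, hrpow_int]
      apply mul_le_mul_of_nonneg_left ?_ hC0
      have hx1 : (0:ℝ) < x ^ (-α+1) := Real.rpow_pos_of_pos hxpos _
      have h1α : (0:ℝ) < α - 1 := by linarith
      have hne1 : -α+1 ≠ 0 := by intro hc; linarith
      have hne2 : α-1 ≠ 0 := ne_of_gt h1α
      have e1 : (1:ℝ)-α = -α+1 := by ring
      rw [e1]
      calc (x ^ (-α+1) - T ^ (-α+1)) / (-α+1)
          = (T ^ (-α+1) - x ^ (-α+1)) / (α-1) := by field_simp; ring
        _ ≤ T ^ (-α+1) / (α-1) := by gcongr; linarith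
    -- second part via integration by parts
    have hsubIci : Set.uIcc T x ⊆ Set.Ici T := by
      rw [Set.uIcc_of_le hx]; exact fun s hs => hs.1
    set v : ℝ → ℝ := fun t => t ^ (1-α) / (1-α) with hvdef
    have hvd : ∀ t ∈ Set.uIcc T x, HasDerivAt v (t ^ (-α)) t := by
      intro t ht
      have htpos : (0:ℝ) < t := hsub ht
      have h0 := (Real.hasDerivAt_rpow_const (p := 1-α)
        (Or.inl (ne_of_gt htpos))).div_const (1-α)
      have hne : (1:ℝ)-α ≠ 0 := by intro hc; linarith
      refine h0.congr_deriv ?_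
      rw [show (1-α-1 : ℝ) = -α by ring]
      field_simp
    have hud : ∀ t ∈ Set.uIcc T x, HasDerivAt F (f t) t := fun t ht =>
      hFderiv t (hsub ht) (hsubIci ht)
    have hv'int : IntervalIntegrable (fun t => t ^ (-α)) volume T x := by
      apply ContinuousOn.intervalIntegrable
      exact fun t ht =>
        (Real.continuousAt_rpow_const t _ (Or.inl (ne_of_gt (hsub ht)))).continuousWithinAt
    have hibp := intervalIntegral.integral_mul_deriv_eq_deriv_mul hud hvd (hfint x hx) hv'int
    have hcomm : ∫ t in T..x, t ^ (-α) * F t = ∫ t in T..x, F t * t ^ (-α) := by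
      apply intervalIntegral.integral_congr
      intro t ht
      exact mul_comm _ _
    have hfv : ∫ t in T..x, f t * v t = (∫ t in T..x, t * g1 t) / (1-α) := by
      rw [← intervalIntegral.integral_div]
      apply intervalIntegral.integral_congr
      intro t ht
      have htpos : (0:ℝ) < t := hsub ht
      have key : t ^ α * t ^ (1-α) = t := by
        rw [← Real.rpow_add htpos]; norm_num
      simp only [hfdef, hvdef]
      calc t ^ α * g1 t * (t ^ (1-α) / (1-α))
          = (t ^ α * t ^ (1-α)) * g1 t / (1-α) := by ring
        _ = t * g1 t / (1-α) := by rw [key]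
    have hFxvx : F x * v x ≤ 0 := by
      apply mul_nonpos_of_nonneg_of_nonpos (hFnn x hx)
      rw [hvdef]
      apply div_nonpos_of_nonneg_of_nonpos (Real.rpow_pos_of_pos hxpos _).le
      linarith
    have h1α : (0:ℝ) < α - 1 := by linarith
    have hpart2 : (∫ t in T..x, t ^ (-α) * F t) ≤ (α-1)⁻¹ * I := by
      rw [hcomm, hibp, hF0, hfv]
      have hle := htg1_le_I x hx
      have : -((∫ t in T..x, t * g1 t) / (1-α)) = (∫ t in T..x, t * g1 t) / (α-1) := by
        rw [show (1:ℝ)-α = -(α-1) by ring, div_neg, neg_neg]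
      have h2 : (∫ t in T..x, t * g1 t) / (α-1) ≤ I / (α-1) := by gcongr
      rw [inv_mul_eq_div]
      linarith
    rw [hsplit, hMdef]
    linarith [hpart1, hpart2]
  -- conclusion
  obtain ⟨l₁, hl₁⟩ := aux_mono_tendsto hΨmono hΨle
  have hlow : ∀ x ≥ T, -M ≤ h x - Ψ x := by
    intro x hx
    have := hnn x (hTt₀.trans hx)
    have := hΨle x hx
    linarith
  obtain ⟨l₂, hl₂⟩ := aux_anti_tendsto hAnti hlow
  refine ⟨l₂ + l₁, ?_⟩
  have := hl₂.add hl₁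
  simpa using this
end
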